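/- Let v_t(x) = p(x) + c₀ε(w(x) − 1) + t where p(x) = x_n + σ, |σ| < 1/10, w is the radial barrier centered at x̄ = (1/5)e_n on the annulus A = B_{3/4}(x̄) \ B_{1/20}(x̄), and 0 ≤ t. Then for ε sufficiently small (depending only on n, γ, c₀), at every point of the zero level set {v_t = 0} ∩ A one has |∇v_t| ≥ 1 + c₂ ε for a constant c₂ > 0 depending only on γ and n. -/

import Mathlib

open Metric MeasureTheory Real
open scoped RealInnerProductSpace

/-- The last coordinate `x_n` of a point of `ℝ^{n+1}`. -/
def xn {n : ℕ} (x : EuclideanSpace ℝ (Fin (n + 1))) : ℝ := x (Fin.last n)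

/-- The unit vector `e_n` of `ℝ^{n+1}`. -/
noncomputable def en {n : ℕ} : EuclideanSpace ℝ (Fin (n + 1)) :=
  EuclideanSpace.single (Fin.last n) 1

set_option maxHeartbeats 1000000 in
/-- On the zero level set of the barrier `v_t = p + c₀ε(w - 1) + t` inside the
annulus `A`, the gradient satisfies `|∇v_t| ≥ 1 + c₂ ε` for small `ε`. -/
theorem stmt8 {n : ℕ} (hn : 1 ≤ n) (γ : ℝ) (hγ : γ < 0)
    (hγn : γ < 2 - ((n : ℝ) + 1)) (c₀ : ℝ) (hc₀ : 0 < c₀) (hc₀1 : c₀ < 1) :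
    ∃ ε₀ > (0 : ℝ), ∃ c₂ > (0 : ℝ), ∀ ε : ℝ, 0 < ε → ε ≤ ε₀ →
      ∀ σ : ℝ, |σ| < 1 / 10 → ∀ t : ℝ, 0 ≤ t →
        ∀ x ∈ ball ((1 / 5 : ℝ) • en (n := n)) (3 / 4) \
            closedBall ((1 / 5 : ℝ) • en (n := n)) (1 / 20),
          (xn x + σ) + c₀ * ε *
              ((‖x - (1 / 5 : ℝ) • en (n := n)‖ ^ γ - (3 / 4 : ℝ) ^ γ) /
                ((1 / 20 : ℝ) ^ γ - (3 / 4 : ℝ) ^ γ) - 1) + t = 0 →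
          1 + c₂ * ε ≤
            ‖gradient (fun y => (xn y + σ) + c₀ * ε *
                ((‖y - (1 / 5 : ℝ) • en (n := n)‖ ^ γ - (3 / 4 : ℝ) ^ γ) /
                  ((1 / 20 : ℝ) ^ γ - (3 / 4 : ℝ) ^ γ) - 1) + t) x‖ := by
  set c : EuclideanSpace ℝ (Fin (n + 1)) := (1 / 5 : ℝ) • en (n := n) with hc
  set a : ℝ := (3 / 4 : ℝ) ^ γ with ha
  set b : ℝ := (1 / 20 : ℝ) ^ γ - (3 / 4 : ℝ) ^ γ with hbdef
  have hb : 0 < b := by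
    have := rpow_lt_rpow_of_neg (by norm_num : (0:ℝ) < 1/20) (by norm_num : (1/20:ℝ) < 3/4) hγ
    simp only [hbdef]; linarith
  have h34pos : (0:ℝ) < (3/4 : ℝ) ^ (γ - 2) := rpow_pos_of_pos (by norm_num) _
  have hmγ : (0:ℝ) < -γ := by linarith
  refine ⟨1/20, by norm_num, c₀ * (-γ) * (3/4 : ℝ) ^ (γ - 2) / (20 * b),
    div_pos (mul_pos (mul_pos hc₀ hmγ) h34pos) (by linarith), ?_⟩
  intro ε hε hε₀ σ hσ t ht x hx hv
  set c₂ : ℝ := c₀ * (-γ) * (3/4 : ℝ) ^ (γ - 2) / (20 * b) with hc₂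
  obtain ⟨hx1, hx2⟩ := hx
  rw [mem_ball_iff_norm] at hx1
  rw [mem_closedBall_iff_norm] at hx2
  push_neg at hx2
  set r : ℝ := ‖x - c‖ with hr
  have hr0 : 0 < r := lt_trans (by norm_num) hx2
  -- derivative of the radial part
  have hsq : HasFDerivAt (fun y : EuclideanSpace ℝ (Fin (n+1)) => ‖y - c‖ ^ (2:ℕ))
      ((2:ℕ) • innerSL ℝ (x - c)) x := by
    simpa using ((hasFDerivAt_id x).sub_const c).norm_sq
  have hpow : HasDerivAt (fun s : ℝ => s ^ (γ/2)) ((γ/2) * (r ^ (2:ℕ)) ^ (γ/2 - 1)) (r ^ (2:ℕ)) :=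
    hasDerivAt_rpow_const (Or.inl (pow_ne_zero 2 hr0.ne'))
  have h2 : HasFDerivAt (fun y : EuclideanSpace ℝ (Fin (n+1)) => ‖y - c‖ ^ γ)
      (((γ/2) * (r ^ (2:ℕ)) ^ (γ/2 - 1)) • ((2:ℕ) • innerSL ℝ (x - c))) x := by
    have hcomp := hpow.comp_hasFDerivAt x hsq
    have hfun : (fun y : EuclideanSpace ℝ (Fin (n+1)) => (‖y - c‖ ^ (2:ℕ)) ^ (γ/2))
        = fun y => ‖y - c‖ ^ γ := by
      funext y
      rw [← Real.rpow_natCast ‖y - c‖ 2, ← Real.rpow_mul (norm_nonneg _)]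
      congr 1
      ring
    rw [← hfun]
    exact hcomp
  have hxn : HasFDerivAt (fun y : EuclideanSpace ℝ (Fin (n+1)) => xn y)
      (EuclideanSpace.proj (Fin.last n) : EuclideanSpace ℝ (Fin (n+1)) →L[ℝ] ℝ) x := by
    show HasFDerivAt
      (⇑(EuclideanSpace.proj (Fin.last n) : EuclideanSpace ℝ (Fin (n+1)) →L[ℝ] ℝ)) _ x
    exact ContinuousLinearMap.hasFDerivAt _
  have hdiv : HasFDerivAt (fun y : EuclideanSpace ℝ (Fin (n+1)) => (‖y - c‖ ^ γ - a) / b)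
      (b⁻¹ • (((γ/2) * (r ^ (2:ℕ)) ^ (γ/2 - 1)) • ((2:ℕ) • innerSL ℝ (x - c)))) x := by
    have := (h2.sub_const a).const_mul b⁻¹
    simpa [div_eq_inv_mul] using this
  have hF := (((hxn.add_const σ).add
    (((hdiv.sub_const 1)).const_mul (c₀ * ε))).add_const t)
  have hfderiv := hF.fderiv
  -- value of the derivative in direction e_n
  have hinner_xc : ⟪x - c, en (n := n)⟫ = xn x - 1/5 := by
    rw [inner_sub_left, hc, real_inner_smul_left]
    have h1 : ⟪x, en (n := n)⟫ = xn x := by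
      simp [en, xn, EuclideanSpace.inner_single_right]
    have h2 : ⟪en (n := n), en (n := n)⟫ = (1:ℝ) := by
      simp [en, EuclideanSpace.inner_single_right, EuclideanSpace.single_apply]
    rw [h1, h2]; ring
  have hr_pow : (r ^ (2:ℕ)) ^ (γ/2 - 1) = r ^ (γ - 2) := by
    rw [← Real.rpow_natCast r 2, ← Real.rpow_mul hr0.le]
    congr 1
    ring
  have hval : fderiv ℝ (fun y => (xn y + σ) + c₀ * ε *
      ((‖y - c‖ ^ γ - a) / b - 1) + t) x (en (n := n))
      = 1 + c₀ * ε / b * (γ * r ^ (γ - 2)) * (xn x - 1/5) := by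
    rw [show fderiv ℝ (fun y => (xn y + σ) + c₀ * ε *
        ((‖y - c‖ ^ γ - a) / b - 1) + t) x = _ from hfderiv]
    have hproj : (EuclideanSpace.proj (Fin.last n) :
        EuclideanSpace ℝ (Fin (n+1)) →L[ℝ] ℝ) (en (n := n)) = 1 := by
      show en (n := n) (Fin.last n) = 1
      simp [en, EuclideanSpace.single_apply]
    simp only [ContinuousLinearMap.add_apply, ContinuousLinearMap.smul_apply,
      ContinuousLinearMap.coe_smul', Pi.smul_apply, innerSL_apply_apply, smul_eq_mul,
      nsmul_eq_mul]
    rw [hproj, hinner_xc, hr_pow]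
    push_cast
    field_simp
  -- bound on x_n from the zero level set
  have hwa : a < r ^ γ := rpow_lt_rpow_of_neg hr0 hx1 hγ
  have hwb : r ^ γ < (1/20 : ℝ) ^ γ := rpow_lt_rpow_of_neg (by norm_num) hx2 hγ
  set w : ℝ := (r ^ γ - a) / b with hw
  clear_value w r a b c
  have hw0 : 0 ≤ w := by
    rw [hw]; exact div_nonneg (by linarith) hb.le
  have hw1 : w ≤ 1 := by
    rw [hw, div_le_one hb]; simp only [hbdef, ha]; linarith
  have hσ' := abs_lt.mp hσ
  have hxn_le : xn x - 1/5 ≤ -(1/20) := by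
    have hv' : xn x = -σ - c₀ * ε * (w - 1) - t := by linarith [hv]
    have h1 : c₀ * ε * (1 - w) ≤ ε := by
      have h2 : c₀ * (1 - w) ≤ 1 := by
        nlinarith [mul_nonneg (by linarith : (0:ℝ) ≤ 1 - c₀) (by linarith : (0:ℝ) ≤ 1 - w)]
      have h3 := mul_le_mul_of_nonneg_left h2 hε.le
      have h4 : c₀ * ε * (1 - w) = ε * (c₀ * (1 - w)) := by ring
      linarith
    have h5 : c₀ * ε * (w - 1) = -(c₀ * ε * (1 - w)) := by ring
    rw [hv']
    linarith
  -- bound on the coefficient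
  have hrpow_ge : (3/4 : ℝ) ^ (γ - 2) ≤ r ^ (γ - 2) :=
    (rpow_lt_rpow_of_neg hr0 hx1 (by linarith)).le
  have key : (-γ) * ((3/4 : ℝ) ^ (γ - 2)) * (1/20) ≤ (-γ) * r ^ (γ - 2) * (1/5 - xn x) := by
    have hγ' : (0:ℝ) ≤ -γ := by linarith
    have h120 : (1/20 : ℝ) ≤ 1/5 - xn x := by linarith
    have step1 : (-γ) * ((3/4 : ℝ) ^ (γ - 2)) ≤ (-γ) * r ^ (γ - 2) :=
      mul_le_mul_of_nonneg_left hrpow_ge hγ'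
    calc (-γ) * ((3/4 : ℝ) ^ (γ - 2)) * (1/20) ≤ (-γ) * r ^ (γ - 2) * (1/20) :=
          mul_le_mul_of_nonneg_right step1 (by norm_num)
      _ ≤ (-γ) * r ^ (γ - 2) * (1/5 - xn x) := by
          exact mul_le_mul_of_nonneg_left h120
            (mul_nonneg (by linarith) (rpow_nonneg hr0.le _))
  have hterm : c₂ * ε ≤ c₀ * ε / b * (γ * r ^ (γ - 2)) * (xn x - 1/5) := by
    have heq1 : c₀ * ε / b * (γ * r ^ (γ - 2)) * (xn x - 1/5)
        = (c₀ * ε / b) * ((-γ) * r ^ (γ - 2) * (1/5 - xn x)) := by ring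
    have heq2 : c₂ * ε = (c₀ * ε / b) * ((-γ) * ((3/4 : ℝ) ^ (γ - 2)) * (1/20)) := by
      rw [hc₂]; field_simp
    rw [heq1, heq2]
    exact mul_le_mul_of_nonneg_left key
      (div_nonneg (mul_nonneg hc₀.le hε.le) hb.le)
  -- conclude via Cauchy–Schwarz
  have hgrad_inner : ⟪gradient (fun y => (xn y + σ) + c₀ * ε *
      ((‖y - c‖ ^ γ - a) / b - 1) + t) x, en (n := n)⟫
      = fderiv ℝ (fun y => (xn y + σ) + c₀ * ε *
      ((‖y - c‖ ^ γ - a) / b - 1) + t) x (en (n := n)) :=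
    InnerProductSpace.toDual_symm_apply
  have hen_norm : ‖en (n := n)‖ = 1 := by
    simp [en]
  have hCS := real_inner_le_norm (gradient (fun y => (xn y + σ) + c₀ * ε *
      ((‖y - c‖ ^ γ - a) / b - 1) + t) x) (en (n := n))
  rw [hen_norm, mul_one] at hCS
  calc 1 + c₂ * ε ≤ 1 + c₀ * ε / b * (γ * r ^ (γ - 2)) * (xn x - 1/5) := by linarith
    _ = fderiv ℝ (fun y => (xn y + σ) + c₀ * ε *
        ((‖y - c‖ ^ γ - a) / b - 1) + t) x (en (n := n)) := hval.symm
    _ ≤ ‖gradient (fun y => (xn y + σ) + c₀ * ε *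
        ((‖y - c‖ ^ γ - a) / b - 1) + t) x‖ := by rw [← hgrad_inner]; exact hCS
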